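/- In the q-deformed example, the element W = UV − qVU is central in the algebra generated by U and V: in the tensor cube A ⊗ A ⊗ A set U := 1 ⊗ E ⊗ F and V := E ⊗ F ⊗ 1 and W := U·V − q·(V·U). Then W = (1−q) · (E ⊗ (F·E + K) ⊗ F), and W commutes with both U and V: U·W = W·U and V·W = W·V. -/

import Mathlib

open TensorProduct

/-- In the q-deformed example (Heisenberg double of the Borel subalgebra of
`U_q(sl(2))`, with `K = q^{-H}`), setting `U = 1 ⊗ E ⊗ F`, `V = E ⊗ F ⊗ 1` in the
tensor cube `A ⊗ A ⊗ A`, the element `W = UV - qVU` equals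
`(1-q) • (E ⊗ (FE + K) ⊗ F)` and is central in the algebra generated by `U` and `V`. -/
theorem q_deformed_W_central
    {R A : Type*} [CommRing R] [Ring A] [Algebra R A] (q : R) (E F K : A)
    (hEF : E * F - F * E = (1 - q) • K)
    (hEK : E * K = q • (K * E))
    (hKF : K * F = q • (F * K))
    (U V W : A ⊗[R] (A ⊗[R] A))
    (hU : U = (1 : A) ⊗ₜ[R] (E ⊗ₜ[R] F))
    (hV : V = E ⊗ₜ[R] (F ⊗ₜ[R] (1 : A)))
    (hW : W = U * V - q • (V * U)) :
    W = (1 - q) • (E ⊗ₜ[R] ((F * E + K) ⊗ₜ[R] F)) ∧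
    U * W = W * U ∧ V * W = W * V := by
  have hEF' : E * F = F * E + (1 - q) • K := by
    have := hEF; linear_combination (norm := module) this
  have hW' : W = (1 - q) • (E ⊗ₜ[R] ((F * E + K) ⊗ₜ[R] F)) := by
    simp only [hW, hU, hV, Algebra.TensorProduct.tmul_mul_tmul, one_mul, mul_one, hEF']
    have h2 : ((F * E + (1 - q) • K) ⊗ₜ[R] F : A ⊗[R] A) - q • ((F * E) ⊗ₜ[R] F)
        = (1 - q) • ((F * E + K) ⊗ₜ[R] F) := by
      simp only [add_tmul, ← smul_tmul']
      module
    calc E ⊗ₜ[R] ((F * E + (1 - q) • K) ⊗ₜ[R] F) - q • (E ⊗ₜ[R] ((F * E) ⊗ₜ[R] F))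
        = E ⊗ₜ[R] (((F * E + (1 - q) • K) ⊗ₜ[R] F : A ⊗[R] A) - q • ((F * E) ⊗ₜ[R] F)) := by
          rw [tmul_sub, tmul_smul]
      _ = (1 - q) • (E ⊗ₜ[R] ((F * E + K) ⊗ₜ[R] F)) := by rw [h2, tmul_smul]
  refine ⟨hW', ?_, ?_⟩
  · have key : E * (F * E + K) = (F * E + K) * E := by
      have : E * (F * E) = F * E * E + (1 - q) • (K * E) := by
        calc E * (F * E) = (E * F) * E := (mul_assoc E F E).symm
          _ = (F * E + (1 - q) • K) * E := by rw [hEF']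
          _ = F * E * E + (1 - q) • (K * E) := by
            rw [add_mul, smul_mul_assoc]
      rw [mul_add, add_mul, this, hEK]
      have : (q : R) • (K * E) + (1 - q) • (K * E) = K * E := by module
      linear_combination (norm := module) this
    rw [hU, hW', mul_smul_comm, smul_mul_assoc,
      Algebra.TensorProduct.tmul_mul_tmul, Algebra.TensorProduct.tmul_mul_tmul,
      Algebra.TensorProduct.tmul_mul_tmul, Algebra.TensorProduct.tmul_mul_tmul,
      one_mul, mul_one, key]
  · have key : F * (F * E + K) = (F * E + K) * F := by
      have h1 : (F * E) * F = F * (F * E) + (1 - q) • (F * K) := by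
        calc (F * E) * F = F * (E * F) := mul_assoc F E F
          _ = F * (F * E + (1 - q) • K) := by rw [hEF']
          _ = F * (F * E) + (1 - q) • (F * K) := by
            rw [mul_add, mul_smul_comm]
      rw [mul_add, add_mul, h1, hKF]
      have : (q : R) • (F * K) + (1 - q) • (F * K) = F * K := by module
      linear_combination (norm := module) this
    rw [hV, hW', mul_smul_comm, smul_mul_assoc,
      Algebra.TensorProduct.tmul_mul_tmul, Algebra.TensorProduct.tmul_mul_tmul,
      Algebra.TensorProduct.tmul_mul_tmul, Algebra.TensorProduct.tmul_mul_tmul,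
      one_mul, mul_one, key]
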